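/- Let P be an orthogonal projection with block matrix (x a; a* y) relative to H = H₊ ⊕ H₋, and assume a a* is a compact operator. Then every point t in the spectrum of x with t ≠ 0 and t ≠ 1 is an eigenvalue of x, and is of the form t = 1/2 + √(1/4 - s²) or t = 1/2 - √(1/4 - s²) for some singular value s ≤ 1/2 of a. -/

import Mathlib

open Filter Topology

theorem stmt5 {H : Type*} [NormedAddCommGroup H] [InnerProductSpace ℂ H] [CompleteSpace H]
    (P E : H →L[ℂ] H) (hP : IsSelfAdjoint P) (hP2 : P * P = P)
    (hE : IsSelfAdjoint E) (hE2 : E * E = E)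
    (hcpt : IsCompactOperator ⇑((E * P * (1 - E)) * star (E * P * (1 - E))))
    (t : ℝ) (ht : (t : ℂ) ∈ spectrum ℂ (E * P * E)) (ht0 : t ≠ 0) (ht1 : t ≠ 1) :
    (∃ ξ : H, ξ ≠ 0 ∧ (E * P * E) ξ = (t : ℂ) • ξ) ∧
    ∃ s : ℝ, 0 ≤ s ∧ s ≤ 1 / 2 ∧
      (∃ η : H, η ≠ 0 ∧ ((E * P * (1 - E)) * star (E * P * (1 - E))) η = ((s ^ 2 : ℝ) : ℂ) • η) ∧
      (t = 1 / 2 + Real.sqrt (1 / 4 - s ^ 2) ∨ t = 1 / 2 - Real.sqrt (1 / 4 - s ^ 2)) := by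
  set x : H →L[ℂ] H := E * P * E with hxdef
  set a : H →L[ℂ] H := E * P * (1 - E) with hadef
  set T : H →L[ℂ] H := a * star a with hTdef
  -- key algebra: T = x - x * x
  have hE2' : ∀ z : H →L[ℂ] H, E * (E * z) = E * z := fun z => by
    rw [← mul_assoc, hE2]
  have hP2' : ∀ z : H →L[ℂ] H, P * (P * z) = P * z := fun z => by
    rw [← mul_assoc, hP2]
  have hstara : star a = (1 - E) * P * E := by
    simp only [hadef, star_mul, star_sub, star_one, hE.star_eq, hP.star_eq]
    noncomm_ring
  have hT : T = x - x * x := by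
    rw [hTdef, hstara, hxdef, hadef]
    simp only [mul_sub, sub_mul, mul_one, one_mul, mul_assoc, hE2', hP2']
    abel
  -- x is self-adjoint
  have hx : IsSelfAdjoint x := by
    rw [hxdef]
    show star (E * P * E) = E * P * E
    simp only [star_mul, hE.star_eq, hP.star_eq]
    noncomm_ring
  set f : H →L[ℂ] H := x - algebraMap ℂ (H →L[ℂ] H) (t : ℂ) with hfdef
  have hf_apply : ∀ v : H, f v = x v - (t : ℂ) • v := fun v => by
    simp [hfdef, Algebra.algebraMap_eq_smul_one]
  have hfsa : IsSelfAdjoint f := by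
    refine hx.sub ?_
    show star _ = _
    simp [Algebra.algebraMap_eq_smul_one, star_smul, Complex.star_def, Complex.conj_ofReal]
  -- f is not bounded below
  have hnb : ¬ ∃ c : ℝ, 0 < c ∧ ∀ v : H, c * ‖v‖ ≤ ‖f v‖ := by
    rintro ⟨c, hc, hbd⟩
    have hanti : AntilipschitzWith (⟨c, hc.le⟩ : NNReal)⁻¹ f := by
      apply f.antilipschitz_of_bound
      intro u
      show ‖u‖ ≤ c⁻¹ * ‖f u‖
      rw [inv_mul_eq_div, le_div_iff₀ hc]
      nlinarith [hbd u]
    have hinj : Function.Injective f := hanti.injective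
    have hclosed : IsClosed (Set.range f) := hanti.isClosed_range f.uniformContinuous
    have hclosed' : IsClosed ((LinearMap.range (f : H →ₗ[ℂ] H) : Submodule ℂ H) : Set H) := by
      have : ((LinearMap.range (f : H →ₗ[ℂ] H) : Submodule ℂ H) : Set H) = Set.range f := by
        ext u; simp [LinearMap.mem_range, Set.mem_range]
      rw [this]; exact hclosed
    haveI : CompleteSpace (LinearMap.range (f : H →ₗ[ℂ] H) : Submodule ℂ H) := hclosed'.completeSpace_coe
    have hsurj : (LinearMap.range (f : H →ₗ[ℂ] H) : Submodule ℂ H) = ⊤ := by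
      rw [← Submodule.orthogonal_eq_bot_iff]
      rw [Submodule.eq_bot_iff]
      intro v hv
      have h1 : ∀ u : H, inner ℂ (f u) v = (0 : ℂ) := fun u =>
        hv (f u) (LinearMap.mem_range_self _ u)
      have h3 : ∀ u : H, inner ℂ u (f v) = (0 : ℂ) := fun u => by
        rw [← hfsa.adjoint_eq, ContinuousLinearMap.adjoint_inner_right]
        exact h1 u
      have h2 : f v = 0 := by
        have := h3 (f v)
        rwa [inner_self_eq_zero] at this
      have : f v = f 0 := by simpa using h2
      simpa using hinj this
    have hunit : IsUnit f := by
      rw [ContinuousLinearMap.isUnit_iff_bijective]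
      refine ⟨hinj, ?_⟩
      exact LinearMap.range_eq_top.mp hsurj
    have hneg : IsUnit (algebraMap ℂ (H →L[ℂ] H) (t : ℂ) - x) := by
      have h4 : algebraMap ℂ (H →L[ℂ] H) (t : ℂ) - x = -f := by rw [hfdef]; abel
      rw [h4]; exact hunit.neg
    exact (spectrum.mem_iff.mp ht) hneg
  push_neg at hnb
  choose v hv using fun n : ℕ => hnb (((n : ℝ) + 1)⁻¹) (by positivity)
  have hvne : ∀ n, v n ≠ 0 := fun n h => by
    have := hv n
    rw [h] at this
    simp at this
  set ξ : ℕ → H := fun n => ((‖v n‖ : ℂ))⁻¹ • v n with hξdef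
  have hξnorm : ∀ n, ‖ξ n‖ = 1 := fun n => by
    have hpos : (0:ℝ) < ‖v n‖ := norm_pos_iff.mpr (hvne n)
    simp [hξdef, norm_smul, hpos.ne']
  have hfξ : Tendsto (fun n => f (ξ n)) atTop (𝓝 0) := by
    rw [tendsto_zero_iff_norm_tendsto_zero]
    have hb : ∀ n : ℕ, ‖f (ξ n)‖ ≤ ((n : ℝ) + 1)⁻¹ := fun n => by
      have hpos : (0:ℝ) < ‖v n‖ := norm_pos_iff.mpr (hvne n)
      have h5 : f (ξ n) = ((‖v n‖ : ℂ))⁻¹ • f (v n) := by simp [hξdef, map_smul]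
      rw [h5, norm_smul]
      have h6 : ‖((‖v n‖ : ℂ))⁻¹‖ = ‖v n‖⁻¹ := by
        simp [hpos.le]
      rw [h6]
      calc ‖v n‖⁻¹ * ‖f (v n)‖ ≤ ‖v n‖⁻¹ * (((n : ℝ) + 1)⁻¹ * ‖v n‖) := by
            gcongr
            exact (hv n).le
        _ = ((n : ℝ) + 1)⁻¹ := by field_simp
    have hlim : Tendsto (fun n : ℕ => ((n : ℝ) + 1)⁻¹) atTop (𝓝 0) := by
      have h := tendsto_one_div_add_atTop_nhds_zero_nat (𝕜 := ℝ)
      simpa only [one_div] using h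
    exact squeeze_zero (fun n => norm_nonneg _) hb hlim
  -- compactness of T
  have hK : IsCompact (closure ((⇑T) '' Metric.closedBall 0 1)) :=
    IsCompactOperator.isCompact_closure_image_of_bounded (𝕜₁ := ℂ)
      (f := (T : H →ₗ[ℂ] H)) hcpt Metric.isBounded_closedBall
  have hmem : ∀ n, T (ξ n) ∈ closure ((⇑T) '' Metric.closedBall 0 1) := fun n =>
    subset_closure ⟨ξ n, by
      simp [Metric.mem_closedBall, dist_zero_right, (hξnorm n).le], rfl⟩
  obtain ⟨w, -, φ, hφ, hw⟩ := hK.tendsto_subseq hmem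
  set μ : ℂ := (t : ℂ) - (t : ℂ) ^ 2 with hμdef
  have hμ0 : μ ≠ 0 := by
    have h7 : μ = (t : ℂ) * (1 - (t : ℂ)) := by rw [hμdef]; ring
    rw [h7]
    apply mul_ne_zero
    · exact_mod_cast ht0
    · rw [sub_ne_zero]
      intro h
      exact ht1 (by exact_mod_cast h.symm)
  -- operator identity
  have hop : T - μ • (1 : H →L[ℂ] H) = -((x - ((1 : ℂ) - (t : ℂ)) • 1) * f) := by
    rw [hT, hfdef, Algebra.algebraMap_eq_smul_one, hμdef]
    simp only [mul_sub, sub_mul, smul_mul_assoc, mul_smul_comm, mul_one, one_mul, smul_smul]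
    module
  have hgξ : Tendsto (fun n => T (ξ n) - μ • ξ n) atTop (𝓝 0) := by
    have h1 : ∀ n, T (ξ n) - μ • ξ n = -((x - ((1 : ℂ) - (t : ℂ)) • 1) (f (ξ n))) := fun n => by
      have h8 := congrArg (fun g : H →L[ℂ] H => g (ξ n)) hop
      simpa using h8
    simp only [h1]
    have h9 := ((x - ((1 : ℂ) - (t : ℂ)) • (1 : H →L[ℂ] H)).continuous.tendsto 0).comp hfξ
    simpa using h9.neg
  have hfξφ : Tendsto (fun n => f (ξ (φ n))) atTop (𝓝 0) := hfξ.comp hφ.tendsto_atTop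
  have hgξφ : Tendsto (fun n => T (ξ (φ n)) - μ • ξ (φ n)) atTop (𝓝 0) :=
    hgξ.comp hφ.tendsto_atTop
  have hμξ : Tendsto (fun n => μ • ξ (φ n)) atTop (𝓝 w) := by
    have := hw.sub hgξφ
    simpa using this
  obtain ⟨ξ', hξ'def⟩ : ∃ z : H, z = μ⁻¹ • w := ⟨_, rfl⟩
  have hξφ : Tendsto (fun n => ξ (φ n)) atTop (𝓝 ξ') := by
    rw [hξ'def]
    have := hμξ.const_smul μ⁻¹
    simpa [smul_smul, inv_mul_cancel₀ hμ0] using this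
  have hn1 : ‖ξ'‖ = 1 := by
    have h2 : Tendsto (fun n => ‖ξ (φ n)‖) atTop (𝓝 ‖ξ'‖) := hξφ.norm
    simp only [hξnorm] at h2
    exact tendsto_nhds_unique h2 tendsto_const_nhds
  have hξne : ξ' ≠ 0 := by
    intro h; rw [h, norm_zero] at hn1; norm_num at hn1
  have hfξ' : f ξ' = 0 := by
    have h3 : Tendsto (fun n => f (ξ (φ n))) atTop (𝓝 (f ξ')) :=
      (f.continuous.tendsto _).comp hξφ
    exact tendsto_nhds_unique h3 hfξφ
  have hxξ : x ξ' = (t : ℂ) • ξ' := by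
    have := hfξ'
    rw [hf_apply, sub_eq_zero] at this
    exact this
  have hTξ : T ξ' = μ • ξ' := by
    have h10 : T ξ' = x ξ' - x (x ξ') := by rw [hT]; rfl
    rw [h10, hxξ, map_smul, hxξ, smul_smul, ← sub_smul]
    congr 1
    rw [hμdef]; ring
  -- positivity
  have hpos : 0 < t - t ^ 2 := by
    have h1 : (inner ℂ ξ' (T ξ') : ℂ) = μ := by
      rw [hTξ, inner_smul_right, inner_self_eq_norm_sq_to_K, hn1]
      norm_num
    have h2 : (inner ℂ ξ' (T ξ') : ℂ) = ((‖(ContinuousLinearMap.adjoint a) ξ'‖ ^ 2 : ℝ) : ℂ) := by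
      rw [hTdef, ContinuousLinearMap.mul_apply, ContinuousLinearMap.star_eq_adjoint,
        ← ContinuousLinearMap.adjoint_inner_left, inner_self_eq_norm_sq_to_K]
      norm_cast
    have h4 : ((t - t ^ 2 : ℝ) : ℂ) = ((‖(ContinuousLinearMap.adjoint a) ξ'‖ ^ 2 : ℝ) : ℂ) := by
      rw [← h2, h1, hμdef]
      push_cast
      ring
    have h5 : t - t ^ 2 = ‖(ContinuousLinearMap.adjoint a) ξ'‖ ^ 2 := by exact_mod_cast h4
    have h6 : t - t ^ 2 ≠ 0 := by
      intro h
      apply hμ0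
      rw [hμdef]
      exact_mod_cast congrArg (fun r : ℝ => (r : ℂ)) h
    have h7 : 0 ≤ t - t ^ 2 := h5 ▸ sq_nonneg _
    exact lt_of_le_of_ne h7 (Ne.symm h6)
  refine ⟨⟨ξ', hξne, hxξ⟩, Real.sqrt (t - t ^ 2), Real.sqrt_nonneg _, ?_, ⟨ξ', hξne, ?_⟩, ?_⟩
  · nlinarith [Real.sq_sqrt hpos.le, Real.sqrt_nonneg (t - t ^ 2), sq_nonneg (t - 1 / 2)]
  · rw [Real.sq_sqrt hpos.le, hTξ, hμdef]
    norm_cast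
  · rw [Real.sq_sqrt hpos.le]
    have h14 : (1 : ℝ) / 4 - (t - t ^ 2) = (t - 1 / 2) ^ 2 := by ring
    rw [h14, Real.sqrt_sq_eq_abs]
    rcases le_or_gt (1 / 2 : ℝ) t with h | h
    · left; rw [abs_of_nonneg (by linarith)]; ring
    · right; rw [abs_of_neg (by linarith)]; ring
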